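/- Let A be a normal element (A A* = A* A) of a unital C*-algebra 𝔄, and let ω₁ and ω₂ be states on 𝔄 that are eigenstates of A with distinct eigenvalues λ₁ ≠ λ₂. Then ω₁ and ω₂ are orthogonal, i.e., the operator norm of the continuous linear functional ω₁ − ω₂ equals ‖ω₁‖ + ‖ω₂‖ = 2. -/

import Mathlib

variable {𝔄 : Type*} [CStarAlgebra 𝔄]

/-- A state on a unital C*-algebra `𝔄`: a continuous linear functional `ω : 𝔄 → ℂ`
which is normalized (`ω 1 = 1`) and positive (`ω (a* a)` is a nonnegative real number). -/
def IsState (ω : 𝔄 → ℂ) : Prop :=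
  Continuous ω ∧ IsLinearMap ℂ ω ∧ ω 1 = 1 ∧
    ∀ a : 𝔄, ∃ r : ℝ, 0 ≤ r ∧ ω (star a * a) = (r : ℂ)

/-- `ω` is an eigenstate of `A` with eigenvalue `l` if `ω (B * A) = l * ω B` for all `B`. -/
def IsEigenstate (ω : 𝔄 → ℂ) (A : 𝔄) (l : ℂ) : Prop :=
  ∀ B : 𝔄, ω (B * A) = l * ω B

namespace EigenstatesOrthogonalAux

variable {ω : 𝔄 →L[ℂ] ℂ}

/-- A state is hermitian: `ω (star x) = star (ω x)`. -/
lemma state_star (hs : IsState (⇑ω)) (x : 𝔄) : ω (star x) = star (ω x) := by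
  obtain ⟨-, -, h1, hpos⟩ := hs
  have key : ∀ y : 𝔄, ∃ r : ℝ, ω y + ω (star y) = (r : ℂ) := by
    intro y
    obtain ⟨r1, -, hr1⟩ := hpos (1 + y)
    obtain ⟨r2, -, hr2⟩ := hpos y
    refine ⟨r1 - 1 - r2, ?_⟩
    have hexp : star (1 + y) * (1 + y) = 1 + y + star y + star y * y := by
      rw [star_add, star_one, add_mul, one_mul, mul_add, mul_one]
      abel
    rw [hexp] at hr1
    simp only [map_add, h1] at hr1
    have : ω y + ω (star y) = (r1 : ℂ) - 1 - (r2 : ℂ) := by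
      rw [← hr2]; linear_combination hr1
    rw [this]; push_cast; ring
  obtain ⟨r, hr⟩ := key x
  obtain ⟨s, hs'⟩ := key ((Complex.I : ℂ) • x)
  rw [star_smul, map_smul, map_smul] at hs'
  have him : (ω x + ω (star x)).im = 0 := by rw [hr]; simp
  have hre : (ω x).re = (ω (star x)).re := by
    have : (Complex.I * ω x + star Complex.I * ω (star x)).im = 0 := by
      rw [show (Complex.I : ℂ) • ω x = Complex.I * ω x from rfl,
        show star (Complex.I : ℂ) • ω (star x) = star Complex.I * ω (star x) from rfl] at hs'
      rw [hs']; simp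
    simp only [Complex.star_def, Complex.conj_I, Complex.add_im, Complex.mul_im,
      Complex.I_re, Complex.I_im, Complex.neg_im, Complex.neg_re, Complex.neg_im] at this ⊢
    linarith [this]
  have him' : (ω x).im = -(ω (star x)).im := by
    simp only [Complex.add_im] at him; linarith
  apply Complex.ext <;> simp [Complex.conj_re, Complex.conj_im, hre, him']

/-- Degenerate Cauchy–Schwarz: if `ω (star x * x) = 0` then `ω (star x * y) = 0`. -/
lemma cs_zero (hs : IsState (⇑ω)) {x : 𝔄} (hx : ω (star x * x) = 0) (y : 𝔄) :
    ω (star x * y) = 0 := by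
  by_contra hc
  set c : ℂ := ω (star x * y) with hcdef
  obtain ⟨ry, hry0, hry⟩ := hs.2.2.2 y
  have hyx : ω (star y * x) = star c := by
    have h1 := state_star hs (star x * y)
    rw [star_mul, star_star] at h1
    rw [h1]
  set s : ℝ := -(ry + 1) / (2 * ‖c‖ ^ 2) with hsdef
  set t : ℂ := (s : ℂ) * c with htdef
  obtain ⟨r, hr0, hr⟩ := hs.2.2.2 (t • x + y)
  have hexp : star (t • x + y) * (t • x + y) =
      (star t * t) • (star x * x) + star t • (star x * y) + t • (star y * x) + star y * y := by
    rw [star_add, star_smul, add_mul, mul_add, mul_add, smul_mul_assoc, smul_mul_assoc,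
      mul_smul_comm, mul_smul_comm, smul_smul]
    abel
  rw [hexp] at hr
  simp only [map_add, map_smul, hx, hry, hyx, ← hcdef, smul_eq_mul, mul_zero] at hr
  have hcpos : (0 : ℝ) < ‖c‖ ^ 2 := by
    have := norm_pos_iff.mpr hc
    positivity
  have hcc : c * star c = (‖c‖ : ℂ) ^ 2 := by
    rw [Complex.star_def]; exact RCLike.mul_conj c
  have hst : star t = (s : ℂ) * star c := by
    rw [htdef, star_mul', show (star (s : ℂ)) = (s : ℂ) by simp, mul_comm]
  have hstart : star t * c + t * star c = 2 * (s : ℂ) * (‖c‖ : ℂ) ^ 2 := by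
    rw [hst, htdef]
    linear_combination (2 * (s : ℂ)) * hcc
  have heq : ((2 * s * ‖c‖ ^ 2 + ry : ℝ) : ℂ) = (r : ℂ) := by
    push_cast
    linear_combination hr - hstart
  have heqr : 2 * s * ‖c‖ ^ 2 + ry = r := by exact_mod_cast heq
  have hne2 : (2 * ‖c‖ ^ 2 : ℝ) ≠ 0 := by positivity
  have hss : 2 * s * ‖c‖ ^ 2 = -(ry + 1) := by
    have h2 := div_mul_cancel₀ (-(ry + 1)) hne2
    rw [hsdef]
    linear_combination h2
  rw [hss] at heqr
  linarith

/-- A state has norm one. -/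
lemma state_norm_one (hs : IsState (⇑ω)) : ‖ω‖ = 1 := by
  have h1 : ω 1 = 1 := hs.2.2.1
  have hnt : (0 : 𝔄) ≠ 1 := by
    intro h
    rw [← h, map_zero] at h1
    exact one_ne_zero h1.symm
  haveI : Nontrivial 𝔄 := ⟨0, 1, hnt⟩
  refine le_antisymm ?_ ?_
  · refine ω.opNorm_le_bound zero_le_one fun a => ?_
    rw [one_mul]
    -- step 1 : ‖ω a‖^2 ≤ ra where ω (star a * a) = ra
    obtain ⟨ra, hra0, hra⟩ := hs.2.2.2 a
    obtain ⟨rz, hrz0, hrz⟩ := hs.2.2.2 (a - ω a • 1)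
    have hstar : ω (star a) = star (ω a) := state_star hs a
    have hexp : star (a - ω a • 1) * (a - ω a • 1) =
        star a * a - star (ω a) • a - ω a • star a + (ω a * star (ω a)) • 1 := by
      simp only [star_sub, star_smul, star_one, sub_mul, mul_sub, smul_sub, smul_mul_assoc,
        mul_smul_comm, one_mul, mul_one, smul_smul, mul_comm (star (ω a)) (ω a)]
      abel
    rw [hexp] at hrz
    simp only [map_add, map_sub, map_smul, hra, hstar, h1, smul_eq_mul, mul_one] at hrz
    have habs : ω a * star (ω a) = (‖ω a‖ : ℂ) ^ 2 := by
      rw [Complex.star_def]; exact RCLike.mul_conj (ω a)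
    have hstep1 : (( ‖ω a‖ ^ 2 : ℝ) : ℂ) = ((ra - rz : ℝ) : ℂ) := by
      push_cast
      linear_combination -hrz - habs
    have hstep1' : ‖ω a‖ ^ 2 = ra - rz := by exact_mod_cast hstep1
    -- step 2 : ra ≤ ‖a‖ ^ 2
    letI := CStarAlgebra.spectralOrder 𝔄
    haveI := CStarAlgebra.spectralOrderedRing 𝔄
    have hsa : IsSelfAdjoint (star a * a) := IsSelfAdjoint.star_mul_self a
    have hle : star a * a ≤ algebraMap ℝ 𝔄 ‖star a * a‖ :=
      IsSelfAdjoint.le_algebraMap_norm_self hsa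
    set m : 𝔄 := algebraMap ℝ 𝔄 ‖star a * a‖ - star a * a with hmdef
    have hm0 : (0 : 𝔄) ≤ m := sub_nonneg.mpr hle
    have hmb : m = star (CFC.sqrt m) * CFC.sqrt m := by
      nth_rewrite 1 [← CFC.sqrt_mul_sqrt_self m hm0]
      rw [(IsSelfAdjoint.of_nonneg (CFC.sqrt_nonneg m)).star_eq]
    obtain ⟨rm, hrm0, hrm⟩ := hs.2.2.2 (CFC.sqrt m)
    rw [← hmb, hmdef] at hrm
    have halg : (algebraMap ℝ 𝔄 ‖star a * a‖ : 𝔄) = algebraMap ℂ 𝔄 ((‖star a * a‖ : ℝ) : ℂ) := by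
      rw [IsScalarTower.algebraMap_apply ℝ ℂ 𝔄, Complex.coe_algebraMap]
    have hωalg : ω (algebraMap ℝ 𝔄 ‖star a * a‖) = ((‖star a * a‖ : ℝ) : ℂ) := by
      rw [halg, Algebra.algebraMap_eq_smul_one, map_smul, h1, smul_eq_mul, mul_one]
    rw [map_sub, hωalg, hra] at hrm
    have hrm' : ‖star a * a‖ - ra = rm := by exact_mod_cast hrm
    have hnorm_sq : ‖star a * a‖ = ‖a‖ ^ 2 := by
      rw [CStarRing.norm_star_mul_self, sq]
    have hfin : ‖ω a‖ ^ 2 ≤ ‖a‖ ^ 2 := by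
      rw [hstep1']
      rw [hnorm_sq] at hrm'
      linarith
    nlinarith [hfin, norm_nonneg (ω a), norm_nonneg a, sq_nonneg (‖ω a‖ - ‖a‖),
      sq_nonneg (‖ω a‖ + ‖a‖)]
  · have := ω.le_opNorm 1
    rw [h1, norm_one, norm_one, mul_one] at this
    exact this

/-- Main structural lemma about an eigenstate of a normal element. -/
lemma eigen_key {A : 𝔄} (hA : A * star A = star A * A) {l : ℂ}
    (hs : IsState (⇑ω)) (h : IsEigenstate (⇑ω) A l) :
    (∀ b, ω (b * star A) = star l * ω b) ∧ l ∈ spectrum ℂ A := by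
  set a : 𝔄 := A - l • 1 with hadef
  have hb : ∀ b, ω (b * a) = 0 := by
    intro b
    rw [hadef, mul_sub, map_sub, h b, mul_smul_comm, mul_one, map_smul, smul_eq_mul, sub_self]
  have hstara : star a = star A - star l • 1 := by
    rw [hadef, star_sub, star_smul, star_one]
  have hnorm : a * star a = star a * a := by
    rw [hadef, hstara]
    simp only [sub_mul, mul_sub, smul_sub, smul_mul_assoc, mul_smul_comm, one_mul, mul_one,
      smul_smul, hA, mul_comm l (star l)]
    abel
  have w0 : ω (star a * a) = 0 := hb (star a)
  have w0' : ω (a * star a) = 0 := by rw [hnorm]; exact w0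
  have left : ∀ y, ω (a * y) = 0 := by
    intro y
    have := cs_zero hs (x := star a) (by rwa [star_star]) y
    rwa [star_star] at this
  have right : ∀ b, ω (b * star a) = 0 := by
    intro b
    have h1 := state_star hs (b * star a)
    rw [star_mul, star_star] at h1
    rw [left (star b)] at h1
    exact star_eq_zero.mp h1.symm
  constructor
  · intro b
    have : ω (b * star A) = ω (b * star a) + star l * ω b := by
      rw [hstara, mul_sub, map_sub, mul_smul_comm, mul_one, map_smul, smul_eq_mul]
      ring
    rw [this, right, zero_add]
  · rw [spectrum.mem_iff]
    intro hu
    have hneg : algebraMap ℂ 𝔄 l - A = -a := by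
      rw [hadef, Algebra.algebraMap_eq_smul_one]; abel
    rw [hneg] at hu
    obtain ⟨u, hu'⟩ := hu.neg
    rw [neg_neg] at hu'
    have : ω (a * ↑u⁻¹) = 0 := left _
    rw [← hu', Units.mul_inv] at this
    rw [hs.2.2.1] at this
    exact one_ne_zero this

end EigenstatesOrthogonalAux

open EigenstatesOrthogonalAux in
/-- Two eigenstates of a normal element `A` with distinct eigenvalues are orthogonal:
`‖ω₁ - ω₂‖ = ‖ω₁‖ + ‖ω₂‖ = 2`. -/
theorem eigenstates_orthogonal (A : 𝔄) (hA : A * star A = star A * A)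
    (ω₁ ω₂ : 𝔄 →L[ℂ] ℂ) (hs₁ : IsState (⇑ω₁)) (hs₂ : IsState (⇑ω₂)) (l₁ l₂ : ℂ)
    (h₁ : IsEigenstate (⇑ω₁) A l₁) (h₂ : IsEigenstate (⇑ω₂) A l₂) (hne : l₁ ≠ l₂) :
    ‖ω₁ - ω₂‖ = ‖ω₁‖ + ‖ω₂‖ ∧ ‖ω₁‖ + ‖ω₂‖ = 2 := by
  haveI hsn : IsStarNormal A := ⟨hA.symm⟩
  obtain ⟨rule₁, hm₁⟩ := eigen_key hA hs₁ h₁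
  obtain ⟨rule₂, hm₂⟩ := eigen_key hA hs₂ h₂
  set π : C(spectrum ℂ A, ℂ) →⋆ₐ[ℂ] 𝔄 := cfcHom hsn (R := ℂ) with hπdef
  have hπc : Continuous π := (cfcHom_isClosedEmbedding hsn (R := ℂ)).continuous
  -- the key induction using Stone–Weierstrass
  have hP : ∀ f : C(spectrum ℂ A, ℂ),
      (∀ b, ω₁ (b * π f) = f ⟨l₁, hm₁⟩ * ω₁ b) ∧ (∀ b, ω₂ (b * π f) = f ⟨l₂, hm₂⟩ * ω₂ b) := by
    intro f
    induction f using ContinuousMap.induction_on_of_compact with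
    | const r =>
      have hc : π (ContinuousMap.const _ r) = algebraMap ℂ 𝔄 r := by
        have : (ContinuousMap.const (spectrum ℂ A) r) = algebraMap ℂ C(spectrum ℂ A, ℂ) r := rfl
        rw [this, AlgHomClass.commutes]
      constructor <;> intro b <;>
        rw [hc, Algebra.algebraMap_eq_smul_one, mul_smul_comm, mul_one, map_smul,
          smul_eq_mul] <;> rfl
    | id =>
      have hc : π (ContinuousMap.restrict (spectrum ℂ A) (ContinuousMap.id ℂ)) = A :=
        cfcHom_id hsn
      exact ⟨fun b => by rw [hc]; exact h₁ b, fun b => by rw [hc]; exact h₂ b⟩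
    | star_id =>
      have hc : π (star (ContinuousMap.restrict (spectrum ℂ A) (ContinuousMap.id ℂ))) = star A := by
        rw [map_star, cfcHom_id hsn]
      refine ⟨fun b => ?_, fun b => ?_⟩
      · rw [hc, rule₁ b]; rfl
      · rw [hc, rule₂ b]; rfl
    | add f g hf hg =>
      refine ⟨fun b => ?_, fun b => ?_⟩
      · rw [map_add, mul_add, map_add, hf.1 b, hg.1 b, ContinuousMap.add_apply]; ring
      · rw [map_add, mul_add, map_add, hf.2 b, hg.2 b, ContinuousMap.add_apply]; ring
    | mul f g hf hg =>
      refine ⟨fun b => ?_, fun b => ?_⟩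
      · rw [map_mul π f g, ← mul_assoc, hg.1 (b * π f), hf.1 b, ContinuousMap.mul_apply]; ring
      · rw [map_mul π f g, ← mul_assoc, hg.2 (b * π f), hf.2 b, ContinuousMap.mul_apply]; ring
    | frequently f hf =>
      have hclosed : IsClosed {g : C(spectrum ℂ A, ℂ) |
          (∀ b, ω₁ (b * π g) = g ⟨l₁, hm₁⟩ * ω₁ b) ∧
            (∀ b, ω₂ (b * π g) = g ⟨l₂, hm₂⟩ * ω₂ b)} := by
        simp only [Set.setOf_and, Set.setOf_forall]
        apply IsClosed.inter <;> refine isClosed_iInter fun b => isClosed_eq ?_ ?_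
        · exact ω₁.continuous.comp ((continuous_mul_left b).comp hπc)
        · exact (ContinuousEvalConst.continuous_eval_const _).mul continuous_const
        · exact ω₂.continuous.comp ((continuous_mul_left b).comp hπc)
        · exact (ContinuousEvalConst.continuous_eval_const _).mul continuous_const
      exact hf.mem_of_closed hclosed
  -- the separating function
  have hd : (0 : ℝ) < ‖l₂ - l₁‖ := by
    rw [norm_pos_iff, sub_ne_zero]; exact hne.symm
  set f₀ : C(spectrum ℂ A, ℂ) :=
    ⟨fun z => Complex.ofReal ((1 : ℝ) - 2 * min 1 (‖(z : ℂ) - l₁‖ / ‖l₂ - l₁‖)),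
      Complex.continuous_ofReal.comp <| continuous_const.sub <| continuous_const.mul <|
        continuous_const.min <|
          ((continuous_subtype_val.sub continuous_const).norm).div_const _⟩ with hf₀def
  have hv₁ : f₀ ⟨l₁, hm₁⟩ = 1 := by
    simp [hf₀def]
  have hv₂ : f₀ ⟨l₂, hm₂⟩ = -1 := by
    simp only [hf₀def, ContinuousMap.coe_mk, div_self hd.ne', min_self]
    norm_num
  have hnf : ‖f₀‖ ≤ 1 := by
    rw [ContinuousMap.norm_le _ zero_le_one]
    intro z
    rw [hf₀def]
    simp only [ContinuousMap.coe_mk, Complex.norm_real, Real.norm_eq_abs]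
    rw [abs_le]
    have h0 : (0 : ℝ) ≤ min 1 (‖(z : ℂ) - l₁‖ / ‖l₂ - l₁‖) :=
      le_min zero_le_one (by positivity)
    have hle : min 1 (‖(z : ℂ) - l₁‖ / ‖l₂ - l₁‖) ≤ 1 := min_le_left _ _
    constructor <;> linarith
  set x₀ : 𝔄 := π f₀ with hx₀def
  have hx : ‖x₀‖ ≤ 1 := by
    rw [hx₀def, hπdef, norm_cfcHom A f₀]
    exact hnf
  have hω₁x : ω₁ x₀ = 1 := by
    have := (hP f₀).1 1
    rw [one_mul, hv₁, hs₁.2.2.1, mul_one] at this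
    exact this
  have hω₂x : ω₂ x₀ = -1 := by
    have := (hP f₀).2 1
    rw [one_mul, hv₂, hs₂.2.2.1, mul_one] at this
    exact this
  have n₁ : ‖ω₁‖ = 1 := state_norm_one hs₁
  have n₂ : ‖ω₂‖ = 1 := state_norm_one hs₂
  have upper : ‖ω₁ - ω₂‖ ≤ 2 := by
    calc ‖ω₁ - ω₂‖ ≤ ‖ω₁‖ + ‖ω₂‖ := norm_sub_le _ _
    _ = 2 := by rw [n₁, n₂]; norm_num
  have lower : (2 : ℝ) ≤ ‖ω₁ - ω₂‖ := by
    have hval : (ω₁ - ω₂) x₀ = 2 := by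
      simp [hω₁x, hω₂x]; norm_num
    calc (2 : ℝ) = ‖((ω₁ - ω₂) x₀ : ℂ)‖ := by rw [hval]; simp
    _ ≤ ‖ω₁ - ω₂‖ * ‖x₀‖ := (ω₁ - ω₂).le_opNorm x₀
    _ ≤ ‖ω₁ - ω₂‖ * 1 := mul_le_mul_of_nonneg_left hx (norm_nonneg _)
    _ = ‖ω₁ - ω₂‖ := mul_one _
  refine ⟨?_, by rw [n₁, n₂]; norm_num⟩
  rw [n₁, n₂]
  linarith
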